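/- Let p_1,…,p_k, v_1,…,v_n ∈ ℤ^n and a ∈ ℝ^n, and let C_λ(V) ⊂ ℂ^n be the image of the map ℂ^k → ℂ^n sending w = (w_1,…,w_k) to the point with i-th coordinate exp(⟨a, v_i⟩ + ∑_{l=1}^k ⟨p_l, v_i⟩ w_l). Then for every z in the topological closure C̄_λ(V) of C_λ(V) in ℂ^n, there exists t = (t_1,…,t_k) ∈ ℂ^k with |t_l| = 1 for all l such that i_V(t)·z = (|z_1|,…,|z_n|), i.e. (∏_{l=1}^k t_l^{⟨p_l,v_i⟩}) z_i = |z_i| for every i = 1,…,n. In particular, for a point z ∈ C_λ(V) with z_i = exp(∑_l ⟨p_l,v_i⟩ u_l + ⟨a,v_i⟩ + √−1 ∑_l ⟨p_l,v_i⟩ v_l) (u_l, v_l ∈ ℝ), the choice t_l = exp(−√−1 v_l) works, and then |z_i| = exp(∑_l ⟨p_l,v_i⟩ u_l + ⟨a,v_i⟩). -/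

import Mathlib

open Finset

/-- Every point of the closure of the local model `C_λ(V)` of the complex
subtorus can be moved by the `T^k`-action to the vector of absolute values of its
coordinates; for points of `C_λ(V)` in exponential form, `t l = exp(−√-1 v l)` works
and `|z i| = exp(∑ l ⟨p l, v i⟩ u l + ⟨a, v i⟩)`. -/
lemma aux5 {k : ℕ} (c : Fin k → ℤ) (w : Fin k → ℂ) (A : ℝ) :
    (∏ l, Complex.exp (-(Complex.I * ((w l).im : ℂ))) ^ c l) *
      Complex.exp ((A : ℂ) + ∑ l, (c l : ℂ) * w l)
    = ((‖Complex.exp ((A : ℂ) + ∑ l, (c l : ℂ) * w l)‖ : ℝ) : ℂ) := by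
  have h1 : ∀ l ∈ Finset.univ, Complex.exp (-(Complex.I * ((w l).im : ℂ))) ^ c l
      = Complex.exp ((c l : ℂ) * (-(Complex.I * ((w l).im : ℂ)))) :=
    fun l _ => (Complex.exp_int_mul _ _).symm
  rw [Finset.prod_congr rfl h1, ← Complex.exp_sum, ← Complex.exp_add, Complex.norm_exp]
  have hre : ((A : ℂ) + ∑ l, (c l : ℂ) * w l).re = A + ∑ l, (c l : ℝ) * (w l).re := by
    simp [Complex.re_sum, Complex.mul_re]
  rw [hre, Complex.ofReal_exp]
  congr 1
  push_cast
  rw [add_comm, add_assoc]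
  congr 1
  rw [← Finset.sum_add_distrib]
  refine Finset.sum_congr rfl fun l _ => ?_
  linear_combination (-(c l : ℂ)) * Complex.re_add_im (w l)


theorem stmt5 (n k : ℕ)
    (p : Fin k → Fin n → ℤ) (v : Fin n → Fin n → ℤ) (a : Fin n → ℝ)
    (F : (Fin k → ℂ) → (Fin n → ℂ))
    (hF : ∀ w i, F w i = Complex.exp
      (((∑ m, a m * (v i m : ℝ) : ℝ) : ℂ) + ∑ l, ((∑ m, p l m * v i m : ℤ) : ℂ) * w l)) :
    (∀ z ∈ closure (Set.range F),
      ∃ t : Fin k → ℂ, (∀ l, ‖t l‖ = 1) ∧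
        ∀ i, (∏ l, t l ^ (∑ m, p l m * v i m)) * z i = ((‖z i‖ : ℝ) : ℂ)) ∧
    (∀ (uu vv : Fin k → ℝ) (z : Fin n → ℂ),
      (∀ i, z i = Complex.exp
        (((∑ l, (∑ m, p l m * v i m : ℤ) * uu l + ∑ m, a m * (v i m : ℝ) : ℝ) : ℂ)
          + Complex.I * ((∑ l, (∑ m, p l m * v i m : ℤ) * vv l : ℝ) : ℂ))) →
      ∀ i, ((∏ l, Complex.exp (-(Complex.I * (vv l : ℂ))) ^ (∑ m, p l m * v i m)) * z i
              = ((‖z i‖ : ℝ) : ℂ)) ∧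
        ‖z i‖
          = Real.exp (∑ l, (∑ m, p l m * v i m : ℤ) * uu l + ∑ m, a m * (v i m : ℝ))) := by
  constructor
  · intro z hz
    obtain ⟨f, hfmem, hfz⟩ := mem_closure_iff_seq_limit.mp hz
    choose w hw using hfmem
    set t : ℕ → Fin k → ℂ := fun j l => Complex.exp (-(Complex.I * ((w j l).im : ℂ))) with ht
    have hK : IsCompact (Set.univ.pi fun _ : Fin k => Metric.sphere (0 : ℂ) 1) :=
      isCompact_univ_pi fun _ => isCompact_sphere 0 1
    have htK : ∀ j, t j ∈ Set.univ.pi fun _ : Fin k => Metric.sphere (0 : ℂ) 1 := by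
      intro j
      rw [Set.mem_univ_pi]
      intro l
      simp [ht, mem_sphere_zero_iff_norm, Complex.norm_exp]
    obtain ⟨T, hT, φ, hφ, hTend⟩ := hK.tendsto_subseq htK
    have hT1 : ∀ l, ‖T l‖ = 1 := by
      intro l
      have := hT l (Set.mem_univ l)
      simpa [mem_sphere_zero_iff_norm] using this
    refine ⟨T, hT1, fun i => ?_⟩
    have key : ∀ j, (∏ l, t j l ^ (∑ m, p l m * v i m)) * f j i
        = ((‖f j i‖ : ℝ) : ℂ) := by
      intro j
      rw [← hw j, hF]
      exact aux5 (fun l => ∑ m, p l m * v i m) (w j) _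
    have hzero : ∀ l, T l ≠ 0 := by
      intro l h
      simpa [h] using hT1 l
    have hfz' : Filter.Tendsto (fun j => f (φ j) i) Filter.atTop (nhds (z i)) :=
      ((continuous_apply i).tendsto z).comp (hfz.comp hφ.tendsto_atTop)
    have h1 : Filter.Tendsto (fun j => (∏ l, t (φ j) l ^ (∑ m, p l m * v i m)) * f (φ j) i)
        Filter.atTop (nhds ((∏ l, T l ^ (∑ m, p l m * v i m)) * z i)) := by
      refine Filter.Tendsto.mul ?_ hfz'
      refine tendsto_finset_prod _ fun l _ => ?_
      exact (((continuous_apply l).tendsto T).comp hTend).zpow₀ _ (Or.inl (hzero l))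
    have h2 : Filter.Tendsto (fun j => (∏ l, t (φ j) l ^ (∑ m, p l m * v i m)) * f (φ j) i)
        Filter.atTop (nhds ((‖z i‖ : ℝ) : ℂ)) := by
      have he : (fun j => (∏ l, t (φ j) l ^ (∑ m, p l m * v i m)) * f (φ j) i)
          = fun j => ((‖f (φ j) i‖ : ℝ) : ℂ) := funext fun j => key (φ j)
      rw [he]
      exact (Complex.continuous_ofReal.tendsto _).comp
        ((continuous_norm.tendsto _).comp hfz')
    exact tendsto_nhds_unique h1 h2
  · intro uu vv z hz i
    have hz' : z i = Complex.exp (((∑ m, a m * (v i m : ℝ) : ℝ) : ℂ)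
        + ∑ l, ((∑ m, p l m * v i m : ℤ) : ℂ) * ((uu l : ℂ) + Complex.I * vv l)) := by
      rw [hz i]
      congr 1
      push_cast
      have : ∑ l, ((∑ m, (p l m : ℂ) * (v i m : ℂ)) * ((uu l : ℂ) + Complex.I * vv l))
          = ∑ l, ((∑ m, (p l m : ℂ) * (v i m : ℂ)) * uu l)
            + ∑ l, Complex.I * ((∑ m, (p l m : ℂ) * (v i m : ℂ)) * vv l) := by
        rw [← Finset.sum_add_distrib]
        exact Finset.sum_congr rfl fun l _ => by ring
      rw [this, ← Finset.mul_sum]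
      ring
    constructor
    · have h := aux5 (fun l => ∑ m, p l m * v i m)
        (fun l => (uu l : ℂ) + Complex.I * vv l) (∑ m, a m * (v i m : ℝ))
      simp only [Complex.add_im, Complex.ofReal_im, Complex.mul_im, Complex.I_re,
        Complex.I_im, Complex.ofReal_re, zero_mul, mul_zero, one_mul, mul_one,
        zero_add, add_zero] at h
      rw [hz']
      exact h
    · rw [hz i, Complex.norm_exp]
      congr 1
      simp
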